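/- Let L be a finite set of n lines in ℝ^d, let P ⊆ ℝ^d be a set of k points, let P̂ ⊆ ℝ^d be a finite set with cost(L, P̂) ≤ α · cost(L, P) for some α > 0 (where cost(L, Q) = Σ_{ℓ ∈ L} D(ℓ, Q)). For each ℓ ∈ L let ℓ' be the line parallel to ℓ passing through a closest point of P̂ to ℓ, and let L' = {ℓ' : ℓ ∈ L}. Then cost(L', P) ≤ (α + 1) · cost(L, P). -/

import Mathlib

open Metric

def lineThrough {d : ℕ} (a u : EuclideanSpace ℝ (Fin d)) : Set (EuclideanSpace ℝ (Fin d)) :=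
  {x | ∃ t : ℝ, x = a + t • u}

/-- Distance from a line (as a set) to a finite set of points: the infimum over the
points of the set of the distance from the point to the line. -/
noncomputable def DLP {d : ℕ} (ℓ : Set (EuclideanSpace ℝ (Fin d)))
    (P : Finset (EuclideanSpace ℝ (Fin d))) : ℝ :=
  sInf ((fun p => Metric.infDist p ℓ) '' (P : Set (EuclideanSpace ℝ (Fin d))))

lemma lineThrough_nonempty {d : ℕ} (a u : EuclideanSpace ℝ (Fin d)) :
    (lineThrough a u).Nonempty := ⟨a, 0, by simp⟩

/-- Parallel line triangle inequality. -/
lemma infDist_parallel {d : ℕ} (a u c p : EuclideanSpace ℝ (Fin d)) :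
    Metric.infDist p (lineThrough c u) ≤
      Metric.infDist p (lineThrough a u) + Metric.infDist c (lineThrough a u) := by
  apply le_of_forall_pos_le_add
  intro ε hε
  obtain ⟨x, hx, hxd⟩ := (Metric.infDist_lt_iff (lineThrough_nonempty a u)).1
    (show Metric.infDist p (lineThrough a u) < Metric.infDist p (lineThrough a u) + ε/2 by linarith)
  obtain ⟨y, hy, hyd⟩ := (Metric.infDist_lt_iff (lineThrough_nonempty a u)).1
    (show Metric.infDist c (lineThrough a u) < Metric.infDist c (lineThrough a u) + ε/2 by linarith)
  obtain ⟨t, rfl⟩ := hx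
  obtain ⟨s, rfl⟩ := hy
  have hz : c + (t - s) • u ∈ lineThrough c u := ⟨t - s, rfl⟩
  have h1 : Metric.infDist p (lineThrough c u) ≤ dist p (c + (t - s) • u) :=
    Metric.infDist_le_dist_of_mem hz
  have h2 : dist p (c + (t - s) • u) ≤ dist p (a + t • u) + dist c (a + s • u) := by
    have : p - (c + (t - s) • u) = (p - (a + t • u)) - (c - (a + s • u)) := by
      module
    rw [dist_eq_norm, dist_eq_norm, this]
    calc ‖(p - (a + t • u)) - (c - (a + s • u))‖
        ≤ ‖p - (a + t • u)‖ + ‖c - (a + s • u)‖ := norm_sub_le _ _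
      _ = ‖p - (a + t • u)‖ + ‖c - (a + s • u)‖ := rfl
  linarith
theorem stmt5 {d n k : ℕ} (hk : 1 ≤ k)
    (aa u c : Fin n → EuclideanSpace ℝ (Fin d)) (hu : ∀ i, u i ≠ 0)
    (Phat P : Finset (EuclideanSpace ℝ (Fin d))) (hPhat : Phat.Nonempty) (hPcard : P.card = k)
    (hc : ∀ i, c i ∈ Phat)
    (hclosest : ∀ i, ∀ q ∈ Phat,
      Metric.infDist (c i) (lineThrough (aa i) (u i)) ≤ Metric.infDist q (lineThrough (aa i) (u i)))
    (α : ℝ) (hα : 0 < α)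
    (happrox : (∑ i, DLP (lineThrough (aa i) (u i)) Phat) ≤ α * ∑ i, DLP (lineThrough (aa i) (u i)) P) :
    (∑ i, DLP (lineThrough (c i) (u i)) P) ≤ (α + 1) * ∑ i, DLP (lineThrough (aa i) (u i)) P := by
  have hP : P.Nonempty := Finset.card_pos.1 (by omega)
  -- termwise inequality
  have key : ∀ i, DLP (lineThrough (c i) (u i)) P ≤
      DLP (lineThrough (aa i) (u i)) P + DLP (lineThrough (aa i) (u i)) Phat := by
    intro i
    -- the set for P is finite and nonempty, so sInf is attained
    set S : Set ℝ := (fun p => Metric.infDist p (lineThrough (aa i) (u i))) ''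
      (P : Set (EuclideanSpace ℝ (Fin d))) with hS
    have hSfin : S.Finite := (P.finite_toSet).image _
    have hSne : S.Nonempty := hP.to_set.image _
    obtain ⟨p₀, hp₀P, hp₀⟩ := hSne.csInf_mem hSfin
    -- lower bound on DLP Phat
    have hPhatfin : ((fun p => Metric.infDist p (lineThrough (aa i) (u i))) ''
        (Phat : Set (EuclideanSpace ℝ (Fin d)))).Finite := (Phat.finite_toSet).image _
    have hPhatne := hPhat.to_set.image (fun p => Metric.infDist p (lineThrough (aa i) (u i)))
    obtain ⟨q₀, hq₀, hq₀eq⟩ := hPhatne.csInf_mem hPhatfin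
    have hlow : Metric.infDist (c i) (lineThrough (aa i) (u i)) ≤
        DLP (lineThrough (aa i) (u i)) Phat := by
      rw [DLP, ← hq₀eq]
      exact hclosest i q₀ hq₀
    have h1 : DLP (lineThrough (c i) (u i)) P ≤
        Metric.infDist p₀ (lineThrough (c i) (u i)) := by
      apply csInf_le ((P.finite_toSet.image _).bddBelow)
      exact ⟨p₀, hp₀P, rfl⟩
    calc DLP (lineThrough (c i) (u i)) P
        ≤ Metric.infDist p₀ (lineThrough (c i) (u i)) := h1
      _ ≤ Metric.infDist p₀ (lineThrough (aa i) (u i)) +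
            Metric.infDist (c i) (lineThrough (aa i) (u i)) :=
          infDist_parallel (aa i) (u i) (c i) p₀
      _ ≤ DLP (lineThrough (aa i) (u i)) P + DLP (lineThrough (aa i) (u i)) Phat := by
          rw [DLP, ← hS, ← hp₀]; exact add_le_add_right hlow _
  calc (∑ i, DLP (lineThrough (c i) (u i)) P)
      ≤ ∑ i, (DLP (lineThrough (aa i) (u i)) P + DLP (lineThrough (aa i) (u i)) Phat) :=
        Finset.sum_le_sum fun i _ => key i
    _ = (∑ i, DLP (lineThrough (aa i) (u i)) P) + ∑ i, DLP (lineThrough (aa i) (u i)) Phat := by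
        rw [Finset.sum_add_distrib]
    _ ≤ (∑ i, DLP (lineThrough (aa i) (u i)) P) + α * ∑ i, DLP (lineThrough (aa i) (u i)) P := by
        linarith
    _ = (α + 1) * ∑ i, DLP (lineThrough (aa i) (u i)) P := by ring
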